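/- Let S be a cancellative commutative semitopological semigroup with open shifts and let τ be the topology on the group of fractions ⟨S⟩ generated by the sets g·ι(x)⁻¹ι(V) for g ∈ ⟨S⟩, a fixed x ∈ S and V an open neighborhood of x in S (which makes (⟨S⟩, τ) a semitopological group containing S as an open subsemigroup). Then S is first countable if and only if (⟨S⟩, τ) is first countable. -/

import Mathlib

open Topology Filter


/-- The topology on the group of fractions `G = ⟨S⟩` generated by the sets
`g · ι(x)⁻¹ · ι(V)`, for `g ∈ G`, a fixed `x ∈ S`, and `V` an open neighborhood
of `x` in `S`. -/
def fractionGroupTopology {S : Type*} [Mul S] [TopologicalSpace S] {G : Type*} [CommGroup G]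
    (ι : S →ₙ* G) (x : S) : TopologicalSpace G :=
  TopologicalSpace.generateFrom
    {T : Set G | ∃ (g : G) (V : Set S), IsOpen V ∧ x ∈ V ∧
      T = (fun s : S => g * (ι x)⁻¹ * ι s) '' V}

section Aux

variable {S : Type*} [CommSemigroup S] [IsCancelMul S] [TopologicalSpace S]
    {G : Type*} [CommGroup G] (ι : S →ₙ* G) (x : S)

/-- Core refinement: if `g` lies in a generating set `g'·ι(x)⁻¹·ι(V')`, then some
generating set centered at `g` is contained in it. -/
private lemma fg_refine (hc : ∀ a : S, Continuous fun s : S => a * s)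
    (ho : ∀ a : S, IsOpenMap fun s : S => a * s)
    (g g' : G) {V' : Set S} (hV' : IsOpen V') {v' : S} (hv' : v' ∈ V')
    (hg : g = g' * (ι x)⁻¹ * ι v') :
    ∃ V : Set S, IsOpen V ∧ x ∈ V ∧
      (fun s : S => g * (ι x)⁻¹ * ι s) '' V ⊆ (fun s : S => g' * (ι x)⁻¹ * ι s) '' V' := by
  refine ⟨(fun s => v' * s) ⁻¹' ((fun s => x * s) '' V'),
    (ho x V' hV').preimage (hc v'), ⟨v', hv', mul_comm x v'⟩, ?_⟩
  rintro _ ⟨s, hs, rfl⟩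
  obtain ⟨w, hw, hxw⟩ := hs
  dsimp only at hxw
  refine ⟨w, hw, ?_⟩
  have key : ι x * ι w = ι v' * ι s := by rw [← map_mul, ← map_mul, hxw]
  have hw' : ι w = (ι x)⁻¹ * (ι v' * ι s) := by rw [← key, inv_mul_cancel_left]
  show g' * (ι x)⁻¹ * ι w = g * (ι x)⁻¹ * ι s
  rw [hw', hg]; simp [mul_assoc, mul_comm, mul_left_comm]

/-- The generating sets form a topological basis, hence a neighborhood basis at each point. -/
private lemma fg_nhds_basis (hc : ∀ a : S, Continuous fun s : S => a * s)
    (ho : ∀ a : S, IsOpenMap fun s : S => a * s) (g : G) :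
    (@nhds G (fractionGroupTopology ι x) g).HasBasis
      (fun V : Set S => IsOpen V ∧ x ∈ V)
      (fun V => (fun s : S => g * (ι x)⁻¹ * ι s) '' V) := by
  letI : TopologicalSpace G := fractionGroupTopology ι x
  have hself : ∀ (a : G) (V : Set S), x ∈ V → a ∈ (fun s : S => a * (ι x)⁻¹ * ι s) '' V :=
    fun a V hxV => ⟨x, hxV, by show a * (ι x)⁻¹ * ι x = a; rw [mul_assoc, inv_mul_cancel, mul_one]⟩
  have hbasis : TopologicalSpace.IsTopologicalBasis
      {T : Set G | ∃ (g : G) (V : Set S), IsOpen V ∧ x ∈ V ∧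
        T = (fun s : S => g * (ι x)⁻¹ * ι s) '' V} := by
    refine ⟨?_, ?_, rfl⟩
    · rintro t₁ ⟨g₁, V₁, hV₁, hx₁, rfl⟩ t₂ ⟨g₂, V₂, hV₂, hx₂, rfl⟩ a ⟨ha₁, ha₂⟩
      obtain ⟨v₁, hv₁, h₁⟩ := ha₁
      obtain ⟨v₂, hv₂, h₂⟩ := ha₂
      obtain ⟨W₁, hW₁, hxW₁, hsub₁⟩ := fg_refine ι x hc ho a g₁ hV₁ hv₁ h₁.symm
      obtain ⟨W₂, hW₂, hxW₂, hsub₂⟩ := fg_refine ι x hc ho a g₂ hV₂ hv₂ h₂.symm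
      refine ⟨(fun s : S => a * (ι x)⁻¹ * ι s) '' (W₁ ∩ W₂),
        ⟨a, W₁ ∩ W₂, hW₁.inter hW₂, ⟨hxW₁, hxW₂⟩, rfl⟩,
        hself a _ ⟨hxW₁, hxW₂⟩, ?_⟩
      intro p hp
      exact ⟨hsub₁ (Set.image_mono Set.inter_subset_left hp),
        hsub₂ (Set.image_mono Set.inter_subset_right hp)⟩
    · apply Set.eq_univ_of_forall
      intro a
      exact ⟨(fun s : S => a * (ι x)⁻¹ * ι s) '' Set.univ,
        ⟨a, Set.univ, isOpen_univ, Set.mem_univ x, rfl⟩, hself a _ (Set.mem_univ x)⟩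
  constructor
  intro t
  constructor
  · intro ht
    obtain ⟨u, ⟨hu, hgu⟩, hut⟩ := (hbasis.nhds_hasBasis (a := g)).mem_iff.mp ht
    obtain ⟨g', V', hV', hxV', rfl⟩ := hu
    obtain ⟨v', hv', hgv'⟩ := hgu
    obtain ⟨V, hV, hxV, hsub⟩ := fg_refine ι x hc ho g g' hV' hv' hgv'.symm
    exact ⟨V, ⟨hV, hxV⟩, hsub.trans hut⟩
  · rintro ⟨V, ⟨hV, hxV⟩, hsub⟩
    refine Filter.mem_of_superset ?_ hsub
    exact (hbasis.isOpen ⟨g, V, hV, hxV, rfl⟩).mem_nhds (hself g V hxV)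

/-- The map `s ↦ ι(x)⁻¹ ι(s)` pulls back the fraction-group neighborhoods to the
neighborhoods of `S`. -/
private lemma fg_nhds_comap (hc : ∀ a : S, Continuous fun s : S => a * s)
    (ho : ∀ a : S, IsOpenMap fun s : S => a * s)
    (hinj : Function.Injective ι) (s : S) :
    𝓝 s = Filter.comap (fun t : S => (ι x)⁻¹ * ι t)
      (@nhds G (fractionGroupTopology ι x) ((ι x)⁻¹ * ι s)) := by
  letI : TopologicalSpace G := fractionGroupTopology ι x
  apply le_antisymm
  · have hb := (fg_nhds_basis ι x hc ho ((ι x)⁻¹ * ι s)).comap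
      (fun t : S => (ι x)⁻¹ * ι t)
    refine hb.ge_iff.mpr ?_
    rintro V ⟨hV, hxV⟩
    have hU : IsOpen ((fun t => x * t) ⁻¹' ((fun t => s * t) '' V)) :=
      (ho s V hV).preimage (hc x)
    have hsU : s ∈ (fun t => x * t) ⁻¹' ((fun t => s * t) '' V) :=
      ⟨x, hxV, mul_comm s x⟩
    refine Filter.mem_of_superset (hU.mem_nhds hsU) ?_
    intro t ht
    obtain ⟨v, hv, hxv⟩ := ht
    dsimp only at hxv
    refine ⟨v, hv, ?_⟩
    have key : ι x * ι t = ι s * ι v := by rw [← map_mul, ← map_mul, hxv]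
    have ht' : ι t = (ι x)⁻¹ * (ι s * ι v) := by rw [← key, inv_mul_cancel_left]
    show ((ι x)⁻¹ * ι s) * (ι x)⁻¹ * ι v = (ι x)⁻¹ * ι t
    rw [ht']; simp [mul_assoc, mul_comm, mul_left_comm]
  · refine (nhds_basis_opens s).ge_iff.mpr ?_
    rintro W ⟨hsW, hW⟩
    rw [Filter.mem_comap]
    have hVopen : IsOpen ((fun t => s * t) ⁻¹' ((fun t => x * t) '' W)) :=
      (ho x W hW).preimage (hc s)
    have hxV : x ∈ (fun t => s * t) ⁻¹' ((fun t => x * t) '' W) :=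
      ⟨s, hsW, mul_comm x s⟩
    refine ⟨(fun t : S => ((ι x)⁻¹ * ι s) * (ι x)⁻¹ * ι t) ''
        ((fun t => s * t) ⁻¹' ((fun t => x * t) '' W)),
      (fg_nhds_basis ι x hc ho _).mem_of_mem ⟨hVopen, hxV⟩, ?_⟩
    intro t ht
    obtain ⟨v, hv, hveq⟩ := ht
    dsimp only at hveq
    -- hveq : ((ι x)⁻¹ * ι s) * (ι x)⁻¹ * ι v = (ι x)⁻¹ * ι t
    obtain ⟨w, hwW, hxw⟩ := hv
    dsimp only at hxw
    -- hxw : x * w = s * v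
    have ht' : ι t = ι x * (((ι x)⁻¹ * ι s) * (ι x)⁻¹ * ι v) := by
      rw [hveq, mul_inv_cancel_left]
    have h2 : ι (t * x) = ι (s * v) := by rw [map_mul, map_mul, ht']; simp only [mul_assoc, inv_mul_cancel_left]; rw [mul_comm (ι v) (ι x), inv_mul_cancel_left, mul_inv_cancel_left]
    have h3 : t * x = s * v := hinj h2
    have h4 : x * t = x * w := by rw [mul_comm x t, h3, ← hxw]
    exact mul_left_cancel h4 ▸ hwW

end Aux

/-- Let `S` be a cancellative commutative semitopological semigroup with open
shifts, `G` (with injective hom `ι` generating `G` as `ι(S)ι(S)⁻¹`) its group of fractions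
and `τ` the topology on `G` generated by the sets `g·ι(x)⁻¹·ι(V)` for `g ∈ G`, a fixed
`x ∈ S` and `V` an open neighborhood of `x` in `S`. Then `S` is first countable iff
`(G, τ)` is first countable. -/
theorem firstCountable_iff_fractionGroup_firstCountable
    {S : Type*} [CommSemigroup S] [IsCancelMul S] [TopologicalSpace S]
    (hc : ∀ a : S, Continuous fun s : S => a * s)
    (ho : ∀ a : S, IsOpenMap fun s : S => a * s)
    {G : Type*} [CommGroup G] (ι : S →ₙ* G)
    (hinj : Function.Injective ι)
    (hgen : ∀ g : G, ∃ a b : S, g = ι a * (ι b)⁻¹)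
    (x : S) :
    FirstCountableTopology S ↔
      @FirstCountableTopology G (fractionGroupTopology ι x) := by
  constructor
  · intro hS
    letI : TopologicalSpace G := fractionGroupTopology ι x
    refine ⟨fun g => ?_⟩
    obtain ⟨U, hU, hUb⟩ := (nhds_basis_opens x).exists_antitone_subbasis
    have hb : (𝓝 g).HasBasis (fun _ : ℕ => True)
        (fun n => (fun s : S => g * (ι x)⁻¹ * ι s) '' U n) := by
      constructor
      intro t
      constructor
      · intro ht
        obtain ⟨V, ⟨hVo, hxV⟩, hsub⟩ := (fg_nhds_basis ι x hc ho g).mem_iff.mp ht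
        obtain ⟨n, hn⟩ := hUb.mem_iff.mp (hVo.mem_nhds hxV)
        exact ⟨n, trivial, (Set.image_mono hn).trans hsub⟩
      · rintro ⟨n, -, hsub⟩
        exact Filter.mem_of_superset
          ((fg_nhds_basis ι x hc ho g).mem_of_mem ⟨(hU n).2, (hU n).1⟩) hsub
    exact hb.isCountablyGenerated
  · intro hG
    refine ⟨fun s => ?_⟩
    rw [fg_nhds_comap ι x hc ho hinj s]
    haveI : (@nhds G (fractionGroupTopology ι x) ((ι x)⁻¹ * ι s)).IsCountablyGenerated :=
      hG.nhds_generated_countable _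
    exact Filter.comap.isCountablyGenerated _ _
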